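/- Let M ∈ GLₙ(ℤ). If M is cyclic-good, then M is hyper-good. -/

import Mathlib

open Multiplicative

/-- The homomorphism `ℤ/r → G` sending the generator `1` of `ℤ/r` to a given element `g`
satisfying `g ^ r = 1` (and the trivial homomorphism if `g ^ r ≠ 1`). -/
noncomputable def zmodPowHom {G : Type*} [Group G] (r : ℕ) (g : G) :
    Multiplicative (ZMod r) →* G := by
  classical
  exact if h : g ^ (r : ℕ) = 1 then
    AddMonoidHom.toMultiplicativeLeft
      (ZMod.lift r ⟨(zmultiplesHom (Additive G)) (Additive.ofMul g), by
        show ((r : ℕ) : ℤ) • Additive.ofMul g = 0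
        rw [← ofMul_zpow, zpow_natCast, h]; rfl⟩)
  else 1

/-- The reduction `M_s ∈ GLₙ(ℤ/s)` of a matrix `M ∈ GLₙ(ℤ)` modulo `s`. -/
def glReduction (n s : ℕ) (M : GL (Fin n) ℤ) : GL (Fin n) (ZMod s) :=
  Matrix.GeneralLinearGroup.map (Int.castRingHom (ZMod s)) M

/-- The automorphism of `(ℤ/s)ⁿ` (written multiplicatively) given by the matrix
`M_s ∈ GLₙ(ℤ/s)`. -/
def glAut (n s : ℕ) (M : GL (Fin n) ℤ) : MulAut (Multiplicative (Fin n → ZMod s)) :=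
  AddEquiv.toMultiplicative
    (((LinearMap.GeneralLinearGroup.generalLinearEquiv (ZMod s) (Fin n → ZMod s))
        (Matrix.GeneralLinearGroup.toLin (glReduction n s M))).toAddEquiv)

/-- The action of `ℤ/r` on `(ℤ/s)ⁿ` in which the fixed generator `1` of `ℤ/r` acts by the
reduction `M_s` of `M` modulo `s` (assuming the order of `M_s` divides `r`). -/
noncomputable def glTwist (n s r : ℕ) (M : GL (Fin n) ℤ) :
    Multiplicative (ZMod r) →* MulAut (Multiplicative (Fin n → ZMod s)) :=
  zmodPowHom r (glAut n s M)

/-- The semidirect product `(ℤ/s)ⁿ ⋊_{M_s} ℤ/r`. -/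
noncomputable def MatSdp (n s r : ℕ) (M : GL (Fin n) ℤ) : Type :=
  Multiplicative (Fin n → ZMod s) ⋊[glTwist n s r M] Multiplicative (ZMod r)

noncomputable instance (n s r : ℕ) (M : GL (Fin n) ℤ) : Group (MatSdp n s r M) :=
  inferInstanceAs (Group (Multiplicative (Fin n → ZMod s) ⋊[glTwist n s r M]
    Multiplicative (ZMod r)))

/-- The copy of `(ℤ/s)ⁿ` inside `(ℤ/s)ⁿ ⋊_{M_s} ℤ/r`. -/
noncomputable def MatSdp.A (n s r : ℕ) (M : GL (Fin n) ℤ) : Subgroup (MatSdp n s r M) :=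
  (SemidirectProduct.inl (φ := glTwist n s r M)).range

/-- The element of `(ℤ/s)ⁿ ⋊_{M_s} ℤ/r` given by `v ∈ (ℤ/s)ⁿ`. -/
noncomputable def MatSdp.inlV (n s r : ℕ) (M : GL (Fin n) ℤ) (v : Fin n → ZMod s) :
    MatSdp n s r M :=
  SemidirectProduct.inl (ofAdd v)

/-- The canonical projection `pr_{r,s} : (ℤ/s)ⁿ ⋊_{M_s} ℤ/r → ℤ/r`. -/
noncomputable def MatSdp.pr (n s r : ℕ) (M : GL (Fin n) ℤ) :
    MatSdp n s r M →* Multiplicative (ZMod r) :=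
  SemidirectProduct.rightHom

/-- The fixed generator `t` of `ℤ/r` inside `(ℤ/s)ⁿ ⋊_{M_s} ℤ/r`. -/
noncomputable def MatSdp.t (n s r : ℕ) (M : GL (Fin n) ℤ) : MatSdp n s r M :=
  SemidirectProduct.inr (ofAdd (1 : ZMod r))

/-- A (finite) group `H` is *`p`-hyperelementary* for a prime `p` if there is a short exact
sequence `1 → C → H → P → 1` with `C` a normal cyclic subgroup of order prime to `p` and
`P = H/C` a `p`-group (the latter condition being expressed by saying that every element of
`H` has a `p`-power power lying in `C`);  `H` is *hyperelementary* if it is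
`p`-hyperelementary for some prime `p`. -/
def IsHyperelementary (H : Type*) [Group H] : Prop :=
  ∃ p : ℕ, p.Prime ∧
    ∃ C : Subgroup H, C.Normal ∧ IsCyclic C ∧ Nat.Coprime (Nat.card C) p ∧
      ∀ h : H, ∃ m : ℕ, h ^ (p ^ m) ∈ C

/-- `M ∈ GLₙ(ℤ)` is *cyclic-good* if for all positive integers `o` and `ν` there are primes
`p₁ ≠ p₂` with `pᵢ ≡ 1 mod o` and `pᵢ ≥ ν`, such that, setting `s := p₁p₂` and
`r := s·|GLₙ(ℤ/s)|`, every cyclic subgroup `C` of `(ℤ/s)ⁿ ⋊_{M_s} ℤ/r` satisfies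
(a) `C ∩ (ℤ/s)ⁿ = {0}`, or (b) there is `i ∈ {1,2}` such that `pᵢ` divides both `|C|` and
`[ℤ/r : pr_{r,s}(C)]`. -/
noncomputable def CyclicGood (n : ℕ) (M : GL (Fin n) ℤ) : Prop :=
  ∀ o ν : ℕ, 0 < o → 0 < ν →
    ∃ p₁ p₂ : ℕ, p₁.Prime ∧ p₂.Prime ∧ p₁ ≠ p₂ ∧
      p₁ ≡ 1 [MOD o] ∧ p₂ ≡ 1 [MOD o] ∧ ν ≤ p₁ ∧ ν ≤ p₂ ∧
      ∀ C : Subgroup (MatSdp n (p₁ * p₂)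
          (p₁ * p₂ * Nat.card (GL (Fin n) (ZMod (p₁ * p₂)))) M),
        IsCyclic C →
          C ⊓ MatSdp.A n (p₁ * p₂) (p₁ * p₂ * Nat.card (GL (Fin n) (ZMod (p₁ * p₂)))) M = ⊥
          ∨ (p₁ ∣ Nat.card C ∧
              p₁ ∣ (Subgroup.map (MatSdp.pr n (p₁ * p₂)
                (p₁ * p₂ * Nat.card (GL (Fin n) (ZMod (p₁ * p₂)))) M) C).index)
          ∨ (p₂ ∣ Nat.card C ∧
              p₂ ∣ (Subgroup.map (MatSdp.pr n (p₁ * p₂)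
                (p₁ * p₂ * Nat.card (GL (Fin n) (ZMod (p₁ * p₂)))) M) C).index)

/-- `M ∈ GLₙ(ℤ)` is *hyper-good* if for all positive integers `o` and `ν` there are natural
numbers `s` and `r` such that `s ≡ 1 mod o`, the order of `GLₙ(ℤ/s)` divides `r`, and every
hyperelementary subgroup `H` of `(ℤ/s)ⁿ ⋊_{M_s} ℤ/r` satisfies at least one of:
(a) there is a natural number `k` dividing `s` with `k ≡ 1 mod o`, `k ≥ ν` and
`H ∩ (ℤ/s)ⁿ ⊆ k·(ℤ/s)ⁿ`;  (b) `[ℤ/r : pr_{r,s}(H)] ≥ ν`. -/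
noncomputable def HyperGood (n : ℕ) (M : GL (Fin n) ℤ) : Prop :=
  ∀ o ν : ℕ, 0 < o → 0 < ν →
    ∃ s r : ℕ, s ≡ 1 [MOD o] ∧ Nat.card (GL (Fin n) (ZMod s)) ∣ r ∧
      ∀ H : Subgroup (MatSdp n s r M), IsHyperelementary H →
        (∃ k : ℕ, k ∣ s ∧ k ≡ 1 [MOD o] ∧ ν ≤ k ∧
            ∀ v : Fin n → ZMod s, MatSdp.inlV n s r M v ∈ H →
              ∃ w : Fin n → ZMod s, v = k • w)
        ∨ ν ≤ (Subgroup.map (MatSdp.pr n s r M) H).index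

/-- If `M ∈ GLₙ(ℤ)` is cyclic-good, then `M` is hyper-good. -/

private lemma aux_index {G : Type*} [CommGroup G] [Finite G] {L K : Subgroup G}
    (hLK : L ≤ K) {p q : ℕ} (hp : p.Prime) (hq : q.Prime) (hqp : q ≠ p)
    (hpow : ∀ x ∈ K, ∃ m : ℕ, x ^ (p ^ m) ∈ L) (hdvd : q ∣ L.index) :
    q ∣ K.index := by
  have hrel : L.relIndex K * K.index = L.index := Subgroup.relIndex_mul_index hLK
  have hnot : ¬ q ∣ L.relIndex K := by
    intro hd
    haveI : Fact q.Prime := ⟨hq⟩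
    haveI : Fintype (K ⧸ (L.subgroupOf K)) := Fintype.ofFinite _
    have hcard : q ∣ Fintype.card (K ⧸ (L.subgroupOf K)) := by
      rwa [← Nat.card_eq_fintype_card]
    obtain ⟨g, hg⟩ := exists_prime_orderOf_dvd_card q hcard
    obtain ⟨x, rfl⟩ := QuotientGroup.mk_surjective g
    obtain ⟨m, hm⟩ := hpow (x : G) x.2
    have h1 : (QuotientGroup.mk x : K ⧸ (L.subgroupOf K)) ^ (p ^ m) = 1 := by
      rw [← QuotientGroup.mk_pow, QuotientGroup.eq_one_iff]
      rw [Subgroup.mem_subgroupOf]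
      simpa using hm
    have h2 : q ∣ p ^ m := hg ▸ orderOf_dvd_of_pow_eq_one h1
    exact hqp ((Nat.prime_dvd_prime_iff_eq hq hp).mp (hq.dvd_of_dvd_pow h2))
  rcases (Nat.Prime.dvd_mul hq).mp (hrel ▸ hdvd) with h | h
  · exact absurd h hnot
  · exact h

private lemma aux_zmod {s k : ℕ} [NeZero s] (hks : k ∣ s) {p : ℕ} (hk : k.Prime)
    (hkp : ¬ k ∣ p) (m : ℕ) (v : ZMod s) (hv : (p ^ m) • v = 0) :
    ∃ w : ZMod s, v = k • w := by
  rw [nsmul_eq_mul] at hv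
  have hvv : ((v.val : ℕ) : ZMod s) = v := by
    rw [ZMod.natCast_val, ZMod.cast_id]
  have h1 : ((p ^ m * v.val : ℕ) : ZMod s) = 0 := by
    push_cast [hvv]
    exact_mod_cast hv
  have h2 : s ∣ p ^ m * v.val := (ZMod.natCast_eq_zero_iff _ _).mp h1
  have hcop : Nat.Coprime k (p ^ m) :=
    Nat.Coprime.pow_right m ((Nat.Prime.coprime_iff_not_dvd hk).mpr hkp)
  obtain ⟨y, hy⟩ := hcop.dvd_of_dvd_mul_left (hks.trans h2)
  refine ⟨(y : ZMod s), ?_⟩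
  rw [nsmul_eq_mul, ← hvv, hy]
  push_cast
  ring

theorem hyperGood_of_cyclicGood (n : ℕ) (M : GL (Fin n) ℤ) (h : CyclicGood n M) :
    HyperGood n M := by
  intro o ν ho hν
  obtain ⟨p₁, p₂, hp₁, hp₂, hne, hmod₁, hmod₂, hν₁, hν₂, key⟩ := h o ν ho hν
  set s := p₁ * p₂ with hs
  set r := s * Nat.card (GL (Fin n) (ZMod s)) with hr
  haveI : NeZero s := ⟨Nat.mul_ne_zero hp₁.pos.ne' hp₂.pos.ne'⟩
  haveI : NeZero r := ⟨Nat.mul_ne_zero (NeZero.ne s) Nat.card_pos.ne'⟩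
  haveI : Finite (MatSdp n s r M) := Finite.of_injective
    (fun x : Multiplicative (Fin n → ZMod s) ⋊[glTwist n s r M] Multiplicative (ZMod r) =>
      (x.left, x.right)) (fun a b hab => SemidirectProduct.ext (congrArg Prod.fst hab) (congrArg Prod.snd hab))
  refine ⟨s, r, by simpa using hmod₁.mul hmod₂, ⟨s, mul_comm _ _⟩, ?_⟩
  rintro H ⟨p, hp, C, hCn, hCc, hCcop, hCq⟩
  haveI := hCc
  set C' : Subgroup (MatSdp n s r M) := Subgroup.map H.subtype C with hC'
  have hC'H : C' ≤ H := Subgroup.map_subtype_le C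
  have e := Subgroup.equivMapOfInjective C H.subtype H.subtype_injective
  have hC'cyc : IsCyclic C' := isCyclic_of_surjective e.toMonoidHom e.surjective
  have hcard : Nat.card C' = Nat.card C := (Nat.card_congr e.toEquiv).symm
  rcases key C' hC'cyc with hbot | hcase
  · -- Case (a): C' ∩ A = ⊥
    left
    set k := if p = p₁ then p₂ else p₁ with hk
    have hkprime : k.Prime := by rw [hk]; split <;> assumption
    have hkp : ¬ k ∣ p := by
      intro hd
      have : k = p := (Nat.prime_dvd_prime_iff_eq hkprime hp).mp hd
      rw [hk] at this
      split at this
      · exact hne (by omega)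
      · omega
    refine ⟨k, ?_, ?_, ?_, ?_⟩
    · rw [hk]; split
      · exact hs ▸ dvd_mul_left p₂ p₁
      · exact hs ▸ dvd_mul_right p₁ p₂
    · rw [hk]; split <;> assumption
    · rw [hk]; split <;> assumption
    · intro v hv
      obtain ⟨m, hm⟩ := hCq ⟨_, hv⟩
      have hmem : (MatSdp.inlV n s r M v) ^ (p ^ m) ∈ C' := by
        refine ⟨(⟨_, hv⟩ : H) ^ (p ^ m), hm, ?_⟩
        simp
      have hA : (MatSdp.inlV n s r M v) ^ (p ^ m) ∈ MatSdp.A n s r M := by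
        exact ⟨(ofAdd v) ^ (p ^ m), map_pow _ _ _⟩
      have h1 : (MatSdp.inlV n s r M v) ^ (p ^ m) = 1 := by
        have := hbot ▸ (Subgroup.mem_inf.mpr ⟨hmem, hA⟩)
        simpa [Subgroup.mem_bot] using this
      have hsm : (p ^ m) • v = 0 := by
        have h2 : SemidirectProduct.inl (φ := glTwist n s r M) (ofAdd ((p ^ m) • v))
            = SemidirectProduct.inl (φ := glTwist n s r M) (ofAdd (0 : Fin n → ZMod s)) := by
          rw [ofAdd_nsmul, map_pow]
          exact h1.trans (map_one (SemidirectProduct.inl (φ := glTwist n s r M))).symm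
        have h3 := SemidirectProduct.inl_injective h2
        exact ofAdd.injective h3
      have hcomp : ∀ j, ∃ w : ZMod s, v j = k • w := by
        intro j
        refine aux_zmod ?_ hkprime hkp m (v j) ?_
        · rw [hk]; split
          · exact hs ▸ dvd_mul_left p₂ p₁
          · exact hs ▸ dvd_mul_right p₁ p₂
        · exact congrFun hsm j
      choose w hw using hcomp
      exact ⟨w, funext hw⟩
  · -- Case (b)
    right
    have hpow : ∀ x ∈ Subgroup.map (MatSdp.pr n s r M) H, ∃ m : ℕ,
        x ^ (p ^ m) ∈ Subgroup.map (MatSdp.pr n s r M) C' := by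
      rintro x ⟨g, hg, rfl⟩
      obtain ⟨m, hm⟩ := hCq ⟨g, hg⟩
      refine ⟨m, ⟨g ^ (p ^ m), ⟨(⟨g, hg⟩ : H) ^ (p ^ m), hm, by simp⟩, map_pow _ _ _⟩⟩
    have main : ∀ q : ℕ, q.Prime → ν ≤ q → q ∣ Nat.card C' →
        q ∣ (Subgroup.map (MatSdp.pr n s r M) C').index →
        ν ≤ (Subgroup.map (MatSdp.pr n s r M) H).index := by
      intro q hq hνq hqc hqi
      have hqp : q ≠ p := by
        intro hqe
        subst hqe
        rw [hcard] at hqc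
        have : q ∣ 1 := hCcop ▸ Nat.dvd_gcd hqc dvd_rfl
        exact hq.one_lt.ne' (Nat.dvd_one.mp this)
      have hdvd : q ∣ (Subgroup.map (MatSdp.pr n s r M) H).index :=
        aux_index (Subgroup.map_mono hC'H) hp hq hqp hpow hqi
      exact le_trans hνq (Nat.le_of_dvd
        (Nat.pos_of_ne_zero Subgroup.index_ne_zero_of_finite) hdvd)
    rcases hcase with ⟨hc, hd⟩ | ⟨hc, hd⟩
    · exact main p₁ hp₁ hν₁ hc hd
    · exact main p₂ hp₂ hν₂ hc hd
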